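/- Control of the symmetrized top-order pairing of B_ξ against the self-adjoint part of the stretching operator (estimate of expression (2.9) in the proof of Lemma 2.2): Let α, β ∈ ℕ³ be multi-indices and set θ := max(|α|, |β|). There exists a constant C, depending only on α and β, such that for every ℤ³-periodic smooth divergence-free mean-zero field ξ and every ℤ³-periodic smooth field f: ⟨B_ξ(D^α f), (𝓣_ξ + 𝓣*_ξ)(D^β f)⟩_{L²} + ⟨B_ξ(D^β f), (𝓣_ξ + 𝓣*_ξ)(D^α f)⟩_{L²} ≤ C ‖ξ‖_{W^{2,∞}}² ‖f‖_{W^{θ,2}}². -/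

import Mathlib

open MeasureTheory

noncomputable section

/-- Points of ℝ³ (as `Fin 3 → ℝ`). -/
abbrev V3 := Fin 3 → ℝ
/-- Vector fields on ℝ³. -/
abbrev VF := V3 → V3

/-- Smoothness of a vector field. -/
def SmoothVF (f : VF) : Prop := ContDiff ℝ (⊤ : ℕ∞) f

/-- Smoothness of a scalar function. -/
def SmoothS (p : V3 → ℝ) : Prop := ContDiff ℝ (⊤ : ℕ∞) p

/-- The periodicity cell [0,1)³. -/
def cube : Set V3 := Set.univ.pi fun _ => Set.Ico (0:ℝ) 1

/-- Partial derivative in the j-th coordinate, acting componentwise. -/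
def pd (j : Fin 3) (f : VF) : VF := fun x => fderiv ℝ f x (Pi.single j 1)

/-- Iterated derivative D^α = ∂₁^{α₁}∂₂^{α₂}∂₃^{α₃} for a multi-index α = (α₁, α₂, α₃). -/
def Dm (α : ℕ × ℕ × ℕ) (f : VF) : VF :=
  (pd 0)^[α.1] ((pd 1)^[α.2.1] ((pd 2)^[α.2.2] f))

/-- The order |α| of a multi-index. -/
def mdeg (α : ℕ × ℕ × ℕ) : ℕ := α.1 + α.2.1 + α.2.2

/-- ℤ³-periodicity of a vector field. -/
def Periodic3 (f : VF) : Prop :=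
  ∀ (x : V3) (k : Fin 3 → ℤ), f (x + fun i => (k i : ℝ)) = f x

/-- ℤ³-periodicity of a scalar function. -/
def PeriodicS (p : V3 → ℝ) : Prop :=
  ∀ (x : V3) (k : Fin 3 → ℤ), p (x + fun i => (k i : ℝ)) = p x

/-- Divergence-free: Σ_j ∂_j f^j ≡ 0. -/
def DivFree (f : VF) : Prop := ∀ x, ∑ j, pd j f x j = 0

/-- Mean-zero over the periodicity cell. -/
def MeanZero (f : VF) : Prop := (∫ x in cube, f x) = 0

/-- The L² inner product over the periodicity cell. -/
def L2inner (f g : VF) : ℝ := ∫ x in cube, ∑ i, f x i * g x i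

/-- The finite set of multi-indices of order at most m. -/
def midx (m : ℕ) : Finset (ℕ × ℕ × ℕ) :=
  (Finset.range (m+1) ×ˢ Finset.range (m+1) ×ˢ Finset.range (m+1)).filter
    fun α => mdeg α ≤ m

lemma midx_nonempty (m : ℕ) : (midx m).Nonempty :=
  ⟨(0,0,0), by
    unfold midx
    exact Finset.mem_filter.mpr ⟨Finset.mem_product.mpr ⟨Finset.mem_range.mpr (Nat.succ_pos m),
      Finset.mem_product.mpr ⟨Finset.mem_range.mpr (Nat.succ_pos m),
        Finset.mem_range.mpr (Nat.succ_pos m)⟩⟩, Nat.zero_le m⟩⟩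

/-- The W^{m,2} inner product ⟨f,g⟩_{W^{m,2}} = Σ_{|α|≤m} ⟨D^α f, D^α g⟩_{L²}. -/
def sobInner (m : ℕ) (f g : VF) : ℝ := ∑ α ∈ midx m, L2inner (Dm α f) (Dm α g)

/-- The squared W^{m,2} norm. -/
def sobNormSq (m : ℕ) (f : VF) : ℝ := sobInner m f f

/-- The W^{k,∞} norm: max over |α| ≤ k of sup_x |D^α ξ(x)|. -/
def WinfNorm (k : ℕ) (ξ : VF) : ℝ :=
  (midx k).sup' (midx_nonempty k) fun α => ⨆ x, ‖Dm α ξ x‖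

/-- The transport operator 𝓛_ξ f = Σ_j ξ^j ∂_j f. -/
def transport (ξ f : VF) : VF := fun x => ∑ j, ξ x j • pd j f x

/-- The stretching operator 𝓣_ξ f, with l-th component Σ_j f^j ∂_l ξ^j. -/
def stretch (ξ f : VF) : VF := fun x l => ∑ j, f x j * pd l ξ x j

/-- The L²-adjoint 𝓣*_ξ g, with j-th component Σ_l g^l ∂_l ξ^j. -/
def stretchStar (ξ g : VF) : VF := fun x j => ∑ l, g x l * pd l ξ x j

/-- The transport–stretching operator B_ξ = 𝓛_ξ + 𝓣_ξ. -/
def Bop (ξ f : VF) : VF := fun x => transport ξ f x + stretch ξ f x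

/-- The gradient of a scalar function. -/
def grad (p : V3 → ℝ) : VF := fun x i => fderiv ℝ p x (Pi.single i 1)

/-- `IsLeray u g` : g is the Leray projection 𝒫u of u, i.e. g is a ℤ³-periodic smooth
divergence-free mean-zero field and u − g = ∇p + c for some ℤ³-periodic smooth scalar p
and constant vector c. -/
def IsLeray (u g : VF) : Prop :=
  Periodic3 g ∧ SmoothVF g ∧ DivFree g ∧ MeanZero g ∧
  ∃ (p : V3 → ℝ) (c : V3), PeriodicS p ∧ SmoothS p ∧
    ∀ x, u x - g x = grad p x + c

/-- The componentwise Laplacian. -/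
def lap (f : VF) : VF := fun x => ∑ j, pd j (pd j f) x

/-- The Stokes inner product ⟨u,v⟩_{A^{m/2}}. -/
def stokesInner (m : ℕ) (u v : VF) : ℝ :=
  if m % 2 = 0 then L2inner (lap^[m/2] u) (lap^[m/2] v)
  else ∑ j : Fin 3, L2inner (pd j (lap^[m/2] u)) (pd j (lap^[m/2] v))

/-- A ℤ³-periodic smooth divergence-free mean-zero vector field. -/
def GoodField (f : VF) : Prop :=
  Periodic3 f ∧ SmoothVF f ∧ DivFree f ∧ MeanZero f

section Aux

variable {f : VF} {p q : V3 → ℝ} {j i l : Fin 3}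

/-- scalar partial derivative -/
def pdS (j : Fin 3) (p : V3 → ℝ) : V3 → ℝ := fun x => fderiv ℝ p x (Pi.single j 1)

lemma smooth_pd (hf : SmoothVF f) (j : Fin 3) : SmoothVF (pd j f) := by
  have h1 : ContDiff ℝ (⊤ : ℕ∞) (fderiv ℝ f) := (hf.fderiv_right (le_refl _))
  exact h1.clm_apply contDiff_const

lemma smoothS_pdS (hp : SmoothS p) (j : Fin 3) : SmoothS (pdS j p) := by
  have h1 : ContDiff ℝ (⊤ : ℕ∞) (fderiv ℝ p) := (hp.fderiv_right (le_refl _))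
  exact h1.clm_apply contDiff_const

lemma smooth_eval (hf : SmoothVF f) (i : Fin 3) : SmoothS (fun x => f x i) :=
  (ContinuousLinearMap.proj (R := ℝ) (φ := fun _ : Fin 3 => ℝ) i).contDiff.comp hf

lemma smoothS_mul (hp : SmoothS p) (hq : SmoothS q) : SmoothS (fun x => p x * q x) :=
  ContDiff.mul hp hq

lemma smoothS_add (hp : SmoothS p) (hq : SmoothS q) : SmoothS (fun x => p x + q x) :=
  ContDiff.add hp hq

lemma smoothS_diffAt (hp : SmoothS p) (x : V3) : DifferentiableAt ℝ p x :=
  (hp.differentiable (by simp)).differentiableAt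

lemma pdS_eval (hf : SmoothVF f) (j i : Fin 3) (x : V3) :
    pdS j (fun x => f x i) x = pd j f x i := by
  have h : fderiv ℝ (fun x => f x i) x =
      (ContinuousLinearMap.proj (R := ℝ) (φ := fun _ : Fin 3 => ℝ) i).comp (fderiv ℝ f x) := by
    exact (((ContinuousLinearMap.proj (R := ℝ) (φ := fun _ : Fin 3 => ℝ) i).hasFDerivAt).comp x
      ((hf.differentiable (by simp)).differentiableAt.hasFDerivAt)).fderiv
  simp [pdS, h, pd]

lemma pdS_mul (hp : SmoothS p) (hq : SmoothS q) (x : V3) :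
    pdS j (fun x => p x * q x) x = pdS j p x * q x + p x * pdS j q x := by
  simp only [pdS]
  rw [fderiv_fun_mul (smoothS_diffAt hp x) (smoothS_diffAt hq x)]
  simp [smul_eq_mul]
  ring

lemma pdS_add (hp : SmoothS p) (hq : SmoothS q) (x : V3) :
    pdS j (fun x => p x + q x) x = pdS j p x + pdS j q x := by
  simp only [pdS]
  rw [fderiv_fun_add (smoothS_diffAt hp x) (smoothS_diffAt hq x)]
  simp

lemma pdS_sum {n : ℕ} (g : Fin n → V3 → ℝ) (hg : ∀ i, SmoothS (g i)) (x : V3) :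
    pdS j (fun x => ∑ i, g i x) x = ∑ i, pdS j (g i) x := by
  simp only [pdS]
  rw [fderiv_fun_sum (fun i _ => smoothS_diffAt (hg i) x)]
  simp

end Aux
section Aux2

variable {f ξ : VF} {j i : Fin 3}

lemma periodic_pd (hf : Periodic3 f) (hs : SmoothVF f) (j : Fin 3) : Periodic3 (pd j f) := by
  intro x k
  have hd : ∀ y, HasFDerivAt f (fderiv ℝ f y) y :=
    fun y => ((hs.differentiable (by simp)) y).hasFDerivAt
  have htr : HasFDerivAt (fun y : V3 => y + fun i => (k i : ℝ))
      (ContinuousLinearMap.id ℝ V3) x := (hasFDerivAt_id x).add_const _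
  have hcomp : HasFDerivAt (fun y : V3 => f (y + fun i => (k i : ℝ)))
      ((fderiv ℝ f (x + fun i => (k i : ℝ))).comp (ContinuousLinearMap.id ℝ V3)) x :=
    (hd _).comp x htr
  have heq : (fun y : V3 => f (y + fun i => (k i : ℝ))) = f := funext fun y => hf y k
  rw [heq] at hcomp
  have : fderiv ℝ f x = (fderiv ℝ f (x + fun i => (k i : ℝ))).comp
      (ContinuousLinearMap.id ℝ V3) := (hd x).unique hcomp
  simp only [pd]
  rw [this]
  simp

lemma smooth_iter_pd (hf : SmoothVF f) (j : Fin 3) (n : ℕ) : SmoothVF ((pd j)^[n] f) := by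
  induction n with
  | zero => rw [Function.iterate_zero_apply]; exact hf
  | succ n ih => rw [Function.iterate_succ_apply']; exact smooth_pd ih j

lemma periodic_iter_pd (hf : Periodic3 f) (hs : SmoothVF f) (j : Fin 3) (n : ℕ) :
    Periodic3 ((pd j)^[n] f) := by
  induction n with
  | zero => rw [Function.iterate_zero_apply]; exact hf
  | succ n ih => rw [Function.iterate_succ_apply']
                 exact periodic_pd ih (smooth_iter_pd hs j n) j

lemma smooth_Dm (hf : SmoothVF f) (γ : ℕ × ℕ × ℕ) : SmoothVF (Dm γ f) :=
  smooth_iter_pd (smooth_iter_pd (smooth_iter_pd hf 2 γ.2.2) 1 γ.2.1) 0 γ.1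

lemma periodic_Dm (hf : Periodic3 f) (hs : SmoothVF f) (γ : ℕ × ℕ × ℕ) :
    Periodic3 (Dm γ f) :=
  periodic_iter_pd (periodic_iter_pd (periodic_iter_pd hf hs 2 γ.2.2)
      (smooth_iter_pd hs 2 γ.2.2) 1 γ.2.1)
    (smooth_iter_pd (smooth_iter_pd hs 2 γ.2.2) 1 γ.2.1) 0 γ.1

/-- mixed partials commute for smooth vector fields -/
lemma pd_comm (hf : SmoothVF f) (i j : Fin 3) (x : V3) :
    pd j (pd i f) x = pd i (pd j f) x := by
  have hsymm : IsSymmSndFDerivAt ℝ f x := by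
    refine (hf.contDiffAt).isSymmSndFDerivAt ?_
    rw [minSmoothness_of_isRCLikeNormedField, show (2 : WithTop ℕ∞) = ((2:ℕ∞) : WithTop ℕ∞) from rfl]
    exact WithTop.coe_le_coe.2 (le_top : (2:ℕ∞) ≤ ⊤)
  have hdf' : ContDiff ℝ (⊤ : ℕ∞) (fderiv ℝ f) := (hf.fderiv_right (le_refl _))
  have hdf : Differentiable ℝ (fderiv ℝ f) :=
    hdf'.differentiable (by simp)
  have comp : ∀ v : V3, ∀ w : Fin 3,
      fderiv ℝ (fun y => fderiv ℝ f y v) x (Pi.single w 1)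
        = fderiv ℝ (fderiv ℝ f) x (Pi.single w 1) v := by
    intro v w
    have h1 : HasFDerivAt (fun y => (ContinuousLinearMap.apply ℝ V3 v) (fderiv ℝ f y))
        ((ContinuousLinearMap.apply ℝ V3 v).comp (fderiv ℝ (fderiv ℝ f) x)) x :=
      ((ContinuousLinearMap.apply ℝ V3 v).hasFDerivAt).comp x (hdf x).hasFDerivAt
    have := h1.fderiv
    simp only [ContinuousLinearMap.apply_apply] at this
    rw [this]
    simp
  show fderiv ℝ (fun y => fderiv ℝ f y (Pi.single i 1)) x (Pi.single j 1)
      = fderiv ℝ (fun y => fderiv ℝ f y (Pi.single j 1)) x (Pi.single i 1)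
  rw [comp _ j, comp _ i]
  exact hsymm _ _

end Aux2
section Aux3

variable {ξ : VF}

lemma mem_midx2_aux (a b c : ℕ) (h : a + b + c ≤ 2) : (a,b,c) ∈ midx 2 := by
  unfold midx
  refine Finset.mem_filter.mpr ⟨?_, ?_⟩ <;> simp only [Finset.mem_product, Finset.mem_range, mdeg] <;> omega

lemma bddAbove_norm_periodic {v : VF} (hper : Periodic3 v) (hc : Continuous v) :
    BddAbove (Set.range fun x => ‖v x‖) := by
  have hK : IsCompact (Set.Icc (0:V3) 1) := isCompact_Icc
  have himg : BddAbove ((fun x => ‖v x‖) '' Set.Icc (0:V3) 1) :=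
    hK.bddAbove_image (continuous_norm.comp hc).continuousOn
  refine BddAbove.mono ?_ himg
  rintro _ ⟨x, rfl⟩
  refine ⟨x + fun i => ((-⌊x i⌋ : ℤ) : ℝ), ?_, ?_⟩
  · constructor
    · intro i
      have := Int.fract_nonneg (x i)
      simp only [Pi.add_apply, Pi.zero_apply]
      push_cast
      rw [show x i + -(⌊x i⌋:ℝ) = Int.fract (x i) from by rw [Int.fract]; ring]
      exact this
    · intro i
      have := Int.fract_lt_one (x i)
      simp only [Pi.add_apply, Pi.one_apply]
      push_cast
      rw [show x i + -(⌊x i⌋:ℝ) = Int.fract (x i) from by rw [Int.fract]; ring]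
      linarith
  · show ‖v (x + fun i => ((-⌊x i⌋ : ℤ) : ℝ))‖ = ‖v x‖
    rw [hper x _]

lemma abs_Dm_le (hper : Periodic3 ξ) (hs : SmoothVF ξ) {γ : ℕ × ℕ × ℕ} (hγ : γ ∈ midx 2)
    (x : V3) (l : Fin 3) : |Dm γ ξ x l| ≤ WinfNorm 2 ξ := by
  have h1 : |Dm γ ξ x l| ≤ ‖Dm γ ξ x‖ := by
    rw [← Real.norm_eq_abs]; exact norm_le_pi_norm _ l
  have h2 : ‖Dm γ ξ x‖ ≤ ⨆ y, ‖Dm γ ξ y‖ :=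
    le_ciSup (bddAbove_norm_periodic (periodic_Dm hper hs γ)
      ((smooth_Dm hs γ).continuous)) x
  have h3 : (⨆ y, ‖Dm γ ξ y‖) ≤ WinfNorm 2 ξ :=
    Finset.le_sup' (fun γ => ⨆ y, ‖Dm γ ξ y‖) hγ
  linarith

lemma W_nonneg (hper : Periodic3 ξ) (hs : SmoothVF ξ) : 0 ≤ WinfNorm 2 ξ :=
  le_trans (abs_nonneg _) (abs_Dm_le hper hs (mem_midx2_aux 0 0 0 (by norm_num)) 0 0)

lemma abs_xi_le (hper : Periodic3 ξ) (hs : SmoothVF ξ) (x : V3) (j : Fin 3) :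
    |ξ x j| ≤ WinfNorm 2 ξ := by
  have := abs_Dm_le hper hs (mem_midx2_aux 0 0 0 (by norm_num)) (ξ := ξ) x j
  simpa [Dm] using this

lemma abs_pd_le (hper : Periodic3 ξ) (hs : SmoothVF ξ) (i : Fin 3) (x : V3) (l : Fin 3) :
    |pd i ξ x l| ≤ WinfNorm 2 ξ := by
  fin_cases i
  · have := abs_Dm_le hper hs (mem_midx2_aux 1 0 0 (by norm_num)) (ξ := ξ) x l
    simpa [Dm] using this
  · have := abs_Dm_le hper hs (mem_midx2_aux 0 1 0 (by norm_num)) (ξ := ξ) x l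
    simpa [Dm] using this
  · have := abs_Dm_le hper hs (mem_midx2_aux 0 0 1 (by norm_num)) (ξ := ξ) x l
    simpa [Dm] using this

lemma abs_pd_pd_le (hper : Periodic3 ξ) (hs : SmoothVF ξ) (j i : Fin 3) (x : V3) (l : Fin 3) :
    |pd j (pd i ξ) x l| ≤ WinfNorm 2 ξ := by
  fin_cases i <;> fin_cases j
  · have := abs_Dm_le hper hs (mem_midx2_aux 2 0 0 (by norm_num)) (ξ := ξ) x l
    simpa [Dm] using this
  · rw [pd_comm hs]
    have := abs_Dm_le hper hs (mem_midx2_aux 1 1 0 (by norm_num)) (ξ := ξ) x l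
    simpa [Dm] using this
  · rw [pd_comm hs]
    have := abs_Dm_le hper hs (mem_midx2_aux 1 0 1 (by norm_num)) (ξ := ξ) x l
    simpa [Dm] using this
  · have := abs_Dm_le hper hs (mem_midx2_aux 1 1 0 (by norm_num)) (ξ := ξ) x l
    simpa [Dm] using this
  · have := abs_Dm_le hper hs (mem_midx2_aux 0 2 0 (by norm_num)) (ξ := ξ) x l
    simpa [Dm] using this
  · rw [pd_comm hs]
    have := abs_Dm_le hper hs (mem_midx2_aux 0 1 1 (by norm_num)) (ξ := ξ) x l
    simpa [Dm] using this
  · have := abs_Dm_le hper hs (mem_midx2_aux 1 0 1 (by norm_num)) (ξ := ξ) x l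
    simpa [Dm] using this
  · have := abs_Dm_le hper hs (mem_midx2_aux 0 1 1 (by norm_num)) (ξ := ξ) x l
    simpa [Dm] using this
  · have := abs_Dm_le hper hs (mem_midx2_aux 0 0 2 (by norm_num)) (ξ := ξ) x l
    simpa [Dm] using this

end Aux3
section Aux4

lemma cube_subset_Icc : cube ⊆ Set.Icc (0 : V3) 1 := by
  intro x hx
  rw [← Set.pi_univ_Icc]
  intro i _
  have := hx i (Set.mem_univ i)
  exact ⟨this.1, this.2.le⟩

lemma measurableSet_cube : MeasurableSet cube :=
  MeasurableSet.univ_pi fun _ => measurableSet_Ico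

lemma integrableOn_cube {g : V3 → ℝ} (hg : Continuous g) : IntegrableOn g cube := by
  exact (hg.continuousOn.integrableOn_compact isCompact_Icc).mono_set cube_subset_Icc

lemma cube_ae_eq_Icc : cube =ᵐ[(volume : Measure V3)] Set.Icc (0 : V3) 1 := by
  have : (volume : Measure V3) = Measure.pi fun _ => volume := volume_pi
  rw [this]
  have := Measure.univ_pi_Ico_ae_eq_Icc
    (μ := fun _ : Fin 3 => (volume : Measure ℝ)) (f := fun _ : Fin 3 => (0:ℝ))
    (g := fun _ : Fin 3 => (1:ℝ))
  exact this

lemma insertNth_one_eq (j : Fin 3) (y : Fin 2 → ℝ) :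
    Fin.insertNth j (1:ℝ) y
      = Fin.insertNth j (0:ℝ) y + fun i => (((Pi.single j 1 : Fin 3 → ℤ) i : ℤ) : ℝ) := by
  funext i
  rcases eq_or_ne i j with rfl | hij
  · simp
  · obtain ⟨m, rfl⟩ := Fin.exists_succAbove_eq (Ne.symm hij).symm
    simp [Fin.insertNth_apply_succAbove, Pi.single_apply,
      (Fin.succAbove_ne j m)]

/-- Integral of a partial derivative of a periodic smooth function over the cell vanishes. -/
lemma integral_pdS_eq_zero {p : V3 → ℝ} (hp : SmoothS p) (hper : PeriodicS p) (j : Fin 3) :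
    ∫ x in cube, pdS j p x = 0 := by
  classical
  set a : V3 := 0 with ha
  set b : V3 := 1 with hb
  have hle : a ≤ b := by intro i; simp [ha, hb]
  set F : Fin 3 → V3 → ℝ := fun i => if i = j then p else 0 with hF
  set F' : Fin 3 → V3 → V3 →L[ℝ] ℝ := fun i x => if i = j then fderiv ℝ p x else 0 with hF'
  have Hc : ∀ i, ContinuousOn (F i) (Set.Icc a b) := by
    intro i
    by_cases h : i = j <;> simp only [hF, h, if_pos, if_neg, ite_true, ite_false]
    · exact (hp.continuous).continuousOn
    · exact continuousOn_const
  have Hd : ∀ x ∈ (Set.pi Set.univ fun i => Set.Ioo (a i) (b i)) \ (∅ : Set V3), ∀ i,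
      HasFDerivAt (F i) (F' i x) x := by
    intro x _ i
    by_cases h : i = j
    · simpa [hF, hF', h] using (smoothS_diffAt hp x).hasFDerivAt
    · simpa [hF, hF', h] using (hasFDerivAt_zero (𝕜 := ℝ) (E := V3) (F := ℝ) x)
  have hdiv0 : ∀ x : V3, (∑ i : Fin 3, F' i x (Pi.single i 1)) = pdS j p x := by
    intro x
    have h1 : ∀ i : Fin 3, F' i x (Pi.single i 1)
        = if i = j then fderiv ℝ p x (Pi.single i 1) else 0 := by
      intro i
      by_cases h : i = j <;> simp [hF', h]
    rw [Finset.sum_congr rfl (fun i _ => h1 i), Finset.sum_ite_eq' Finset.univ j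
      (fun i => fderiv ℝ p x (Pi.single i 1))]
    simp [pdS]
  have Hi : IntegrableOn (fun x => ∑ i, F' i x (Pi.single i 1)) (Set.Icc a b) := by
    have hcont : Continuous (fun x => ∑ i : Fin 3, F' i x (Pi.single i 1)) := by
      have := (smoothS_pdS hp j).continuous
      exact Continuous.congr this (fun x => (hdiv0 x).symm)
    exact (hcont.continuousOn).integrableOn_compact isCompact_Icc
  have key := MeasureTheory.integral_divergence_of_hasFDerivAt_off_countable
      (n := 2) a b hle (fun x i => F i x)
      (fun x => ContinuousLinearMap.pi fun i => F' i x) ∅ Set.countable_empty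
      (continuousOn_pi.2 Hc) (fun x hx => hasFDerivAt_pi.2 (Hd x hx)) Hi
  have hdiv : ∀ x : V3, (∑ i : Fin 3, (ContinuousLinearMap.pi fun i => F' i x)
      (Pi.single i 1) i) = pdS j p x := by
    intro x
    rw [← hdiv0 x]
    exact Finset.sum_congr rfl fun i _ => by simp
  -- faces vanish
  have hfaces : ∀ i : Fin 3,
      ((∫ x in Set.Icc (a ∘ Fin.succAbove i) (b ∘ Fin.succAbove i),
          (fun x i => F i x) (Fin.insertNth i (b i) x) i)
        - ∫ x in Set.Icc (a ∘ Fin.succAbove i) (b ∘ Fin.succAbove i),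
          (fun x i => F i x) (Fin.insertNth i (a i) x) i) = 0 := by
    intro i
    by_cases h : i = j
    · subst h
      have : ∀ y : Fin 2 → ℝ, F i (Fin.insertNth i (b i) y) = F i (Fin.insertNth i (a i) y) := by
        intro y
        have hb1 : b i = (1:ℝ) := rfl
        have ha0 : a i = (0:ℝ) := rfl
        rw [hb1, ha0, insertNth_one_eq i y]
        simp only [hF, if_pos rfl]
        exact hper _ _
      simp only [this]
      ring
    · simp [hF, h]
  have h1 : ∫ x in cube, pdS j p x = ∫ x in Set.Icc a b, pdS j p x :=
    setIntegral_congr_set cube_ae_eq_Icc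
  have h2 : (∫ x in Set.Icc a b, ∑ i : Fin 3,
      (ContinuousLinearMap.pi fun i => F' i x) (Pi.single i 1) i)
      = ∫ x in Set.Icc a b, pdS j p x :=
    setIntegral_congr_fun measurableSet_Icc (fun x _ => hdiv x)
  rw [h1, ← h2]
  rw [show (∫ x in Set.Icc a b, ∑ i : Fin 3,
      (ContinuousLinearMap.pi fun i => F' i x) (Pi.single i 1) i) = _ from key]
  exact Finset.sum_eq_zero fun i _ => hfaces i

end Aux4
section Aux5

variable {ξ g h : VF}

def Mxi (ξ : VF) (x : V3) (i l : Fin 3) : ℝ := pd i ξ x l + pd l ξ x i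

def Fq (ξ g h : VF) : V3 → ℝ := fun x => ∑ i, ∑ l, Mxi ξ x i l * (g x i * h x l)

def Kc (ξ : VF) (x : V3) (u v : Fin 3) : ℝ :=
  ((∑ i, (pd i ξ x v + pd v ξ x i) * pd i ξ x u)
    + (∑ i, (pd i ξ x u + pd u ξ x i) * pd i ξ x v))
  - ∑ j, ξ x j * (pd j (pd u ξ) x v + pd j (pd v ξ) x u)

lemma smoothS_Mxi (hξ : SmoothVF ξ) (i l : Fin 3) : SmoothS (fun x => Mxi ξ x i l) :=
  smoothS_add (smooth_eval (smooth_pd hξ i) l) (smooth_eval (smooth_pd hξ l) i)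

lemma smoothS_Fq (hξ : SmoothVF ξ) (hg : SmoothVF g) (hh : SmoothVF h) :
    SmoothS (Fq ξ g h) := by
  apply ContDiff.sum
  intro i _
  apply ContDiff.sum
  intro l _
  exact smoothS_mul (smoothS_Mxi hξ i l) (smoothS_mul (smooth_eval hg i) (smooth_eval hh l))

lemma main_algebra (Ξ G H : Fin 3 → ℝ) (P G' H' : Fin 3 → Fin 3 → ℝ)
    (Q : Fin 3 → Fin 3 → Fin 3 → ℝ) :
    ((∑ i, ((∑ j, Ξ j * G' j i) + (∑ j, G j * P i j)) * (∑ j, H j * (P i j + P j i)))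
      + ∑ i, ((∑ j, Ξ j * H' j i) + (∑ j, H j * P i j)) * (∑ j, G j * (P i j + P j i)))
    = (∑ j, Ξ j * (∑ i, ∑ l, ((Q j i l + Q j l i) * (G i * H l)
          + (P i l + P l i) * (G' j i * H l + G i * H' j l))))
      + ∑ u, ∑ v, (((∑ i, (P i v + P v i) * P i u) + (∑ i, (P i u + P u i) * P i v))
          - ∑ j, Ξ j * (Q j u v + Q j v u)) * (G u * H v) := by
  simp only [Fin.sum_univ_three]
  ring

lemma pdS_Fq (hξ : SmoothVF ξ) (hg : SmoothVF g) (hh : SmoothVF h) (j : Fin 3) (x : V3) :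
    pdS j (Fq ξ g h) x = ∑ i, ∑ l,
      ((pd j (pd i ξ) x l + pd j (pd l ξ) x i) * (g x i * h x l)
        + Mxi ξ x i l * (pd j g x i * h x l + g x i * pd j h x l)) := by
  have h1 : pdS j (Fq ξ g h) x
      = ∑ i, pdS j (fun y => ∑ l, Mxi ξ y i l * (g y i * h y l)) x :=
    pdS_sum (fun i y => ∑ l, Mxi ξ y i l * (g y i * h y l))
      (fun i => ContDiff.sum fun l _ =>
        smoothS_mul (smoothS_Mxi hξ i l) (smoothS_mul (smooth_eval hg i) (smooth_eval hh l))) x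
  rw [h1]
  refine Finset.sum_congr rfl fun i _ => ?_
  have h2 : pdS j (fun y => ∑ l, Mxi ξ y i l * (g y i * h y l)) x
      = ∑ l, pdS j (fun y => Mxi ξ y i l * (g y i * h y l)) x :=
    pdS_sum (fun l y => Mxi ξ y i l * (g y i * h y l))
      (fun l => smoothS_mul (smoothS_Mxi hξ i l)
        (smoothS_mul (smooth_eval hg i) (smooth_eval hh l))) x
  rw [h2]
  refine Finset.sum_congr rfl fun l _ => ?_
  have h3 : pdS j (fun y => Mxi ξ y i l * (g y i * h y l)) x
      = pdS j (fun y => Mxi ξ y i l) x * (g x i * h x l)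
        + Mxi ξ x i l * pdS j (fun y => g y i * h y l) x :=
    pdS_mul (smoothS_Mxi hξ i l) (smoothS_mul (smooth_eval hg i) (smooth_eval hh l)) x
  rw [h3]
  have h4 : pdS j (fun y => Mxi ξ y i l) x
      = pdS j (fun y => pd i ξ y l) x + pdS j (fun y => pd l ξ y i) x :=
    pdS_add (smooth_eval (smooth_pd hξ i) l) (smooth_eval (smooth_pd hξ l) i) x
  have h5 : pdS j (fun y => g y i * h y l) x
      = pdS j (fun y => g y i) x * h x l + g x i * pdS j (fun y => h y l) x :=
    pdS_mul (smooth_eval hg i) (smooth_eval hh l) x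
  rw [h4, h5, pdS_eval (smooth_pd hξ i) j l x, pdS_eval (smooth_pd hξ l) j i x,
    pdS_eval hg j i x, pdS_eval hh j l x]

lemma sum_pdS_q (hξ : SmoothVF ξ) (hg : SmoothVF g) (hh : SmoothVF h)
    (hdiv : DivFree ξ) (x : V3) :
    (∑ j, pdS j (fun y => ξ y j * Fq ξ g h y) x) = ∑ j, ξ x j * pdS j (Fq ξ g h) x := by
  have h1 : ∀ j : Fin 3, pdS j (fun y => ξ y j * Fq ξ g h y) x
      = pd j ξ x j * Fq ξ g h x + ξ x j * pdS j (Fq ξ g h) x := by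
    intro j
    have h2 : pdS j (fun y => ξ y j * Fq ξ g h y) x
        = pdS j (fun y => ξ y j) x * Fq ξ g h x + ξ x j * pdS j (Fq ξ g h) x :=
      pdS_mul (smooth_eval hξ j) (smoothS_Fq hξ hg hh) x
    rw [h2, pdS_eval hξ j j x]
  rw [Finset.sum_congr rfl fun j _ => h1 j, Finset.sum_add_distrib, ← Finset.sum_mul,
    hdiv x, zero_mul, zero_add]

lemma Bop_apply (ξ g : VF) (x : V3) (i : Fin 3) :
    Bop ξ g x i = (∑ j, ξ x j * pd j g x i) + ∑ j, g x j * pd i ξ x j := by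
  simp [Bop, transport, stretch, Finset.sum_apply, Pi.smul_apply, smul_eq_mul]

lemma str_apply (ξ h : VF) (x : V3) (i : Fin 3) :
    stretch ξ h x i + stretchStar ξ h x i = ∑ j, h x j * (pd i ξ x j + pd j ξ x i) := by
  simp only [stretch, stretchStar, ← Finset.sum_add_distrib]
  exact Finset.sum_congr rfl fun j _ => (mul_add _ _ _).symm

/-- the grand pointwise identity -/
lemma pointwise_id (hξ : SmoothVF ξ) (hg : SmoothVF g) (hh : SmoothVF h)
    (hdiv : DivFree ξ) (x : V3) :
    ((∑ i, Bop ξ g x i * (stretch ξ h x i + stretchStar ξ h x i))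
      + ∑ i, Bop ξ h x i * (stretch ξ g x i + stretchStar ξ g x i))
    = (∑ j, pdS j (fun y => ξ y j * Fq ξ g h y) x)
      + ∑ u, ∑ v, Kc ξ x u v * (g x u * h x v) := by
  rw [sum_pdS_q hξ hg hh hdiv x]
  rw [Finset.sum_congr rfl fun j (_ : j ∈ Finset.univ) =>
    congrArg (fun t => ξ x j * t) (pdS_Fq hξ hg hh j x)]
  simp only [Bop_apply, str_apply, Mxi, Kc]
  exact main_algebra (fun j => ξ x j) (fun i => g x i) (fun i => h x i)
    (fun i j => pd i ξ x j) (fun j i => pd j g x i) (fun j i => pd j h x i)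
    (fun j i l => pd j (pd i ξ) x l)

end Aux5
section Aux6

variable {ξ g h : VF}

lemma cont_eval (hp : SmoothVF g) (i : Fin 3) : Continuous fun x => g x i :=
  (smooth_eval hp i).continuous

lemma abs_Kc_le (hper : Periodic3 ξ) (hs : SmoothVF ξ) (x : V3) (u v : Fin 3) :
    |Kc ξ x u v| ≤ 18 * WinfNorm 2 ξ ^ 2 := by
  set W := WinfNorm 2 ξ with hW
  have hW0 : 0 ≤ W := W_nonneg hper hs
  have hbd : ∀ i l : Fin 3, |pd i ξ x l| ≤ W := fun i l => abs_pd_le hper hs i x l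
  have hbd2 : ∀ j i l : Fin 3, |pd j (pd i ξ) x l| ≤ W := fun j i l => abs_pd_pd_le hper hs j i x l
  have hbx : ∀ j, |ξ x j| ≤ W := abs_xi_le hper hs x
  have t1 : ∀ a b : Fin 3, |∑ i, (pd i ξ x a + pd a ξ x i) * pd i ξ x b| ≤ 6 * W^2 := by
    intro a b
    calc |∑ i, (pd i ξ x a + pd a ξ x i) * pd i ξ x b|
        ≤ ∑ i, |(pd i ξ x a + pd a ξ x i) * pd i ξ x b| := Finset.abs_sum_le_sum_abs _ _
      _ ≤ ∑ _i : Fin 3, 2 * W^2 := by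
          refine Finset.sum_le_sum fun i _ => ?_
          rw [abs_mul]
          have h1 : |pd i ξ x a + pd a ξ x i| ≤ 2 * W :=
            (abs_add_le _ _).trans (by linarith [hbd i a, hbd a i])
          calc |pd i ξ x a + pd a ξ x i| * |pd i ξ x b| ≤ (2*W) * W :=
                mul_le_mul h1 (hbd i b) (abs_nonneg _) (by linarith)
            _ = 2 * W^2 := by ring
      _ = 6 * W^2 := by simp [Fin.sum_univ_three]; ring
  have t3 : |∑ j, ξ x j * (pd j (pd u ξ) x v + pd j (pd v ξ) x u)| ≤ 6 * W^2 := by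
    calc |∑ j, ξ x j * (pd j (pd u ξ) x v + pd j (pd v ξ) x u)|
        ≤ ∑ j, |ξ x j * (pd j (pd u ξ) x v + pd j (pd v ξ) x u)| := Finset.abs_sum_le_sum_abs _ _
      _ ≤ ∑ _j : Fin 3, 2 * W^2 := by
          refine Finset.sum_le_sum fun j _ => ?_
          rw [abs_mul]
          have h1 : |pd j (pd u ξ) x v + pd j (pd v ξ) x u| ≤ 2 * W :=
            (abs_add_le _ _).trans (by linarith [hbd2 j u v, hbd2 j v u])
          calc |ξ x j| * |pd j (pd u ξ) x v + pd j (pd v ξ) x u| ≤ W * (2*W) :=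
                mul_le_mul (hbx j) h1 (abs_nonneg _) hW0
            _ = 2 * W^2 := by ring
      _ = 6 * W^2 := by simp [Fin.sum_univ_three]; ring
  have habs : |Kc ξ x u v| ≤ |(∑ i, (pd i ξ x v + pd v ξ x i) * pd i ξ x u)
      + (∑ i, (pd i ξ x u + pd u ξ x i) * pd i ξ x v)|
      + |∑ j, ξ x j * (pd j (pd u ξ) x v + pd j (pd v ξ) x u)| := abs_sub _ _
  have habs2 := abs_add_le (∑ i, (pd i ξ x v + pd v ξ x i) * pd i ξ x u)
      (∑ i, (pd i ξ x u + pd u ξ x i) * pd i ξ x v)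
  linarith [t1 v u, t1 u v]

lemma canon_bound (Kf : Fin 3 → Fin 3 → ℝ) (G H : Fin 3 → ℝ) (B : ℝ) (hB : 0 ≤ B)
    (hK : ∀ u v, |Kf u v| ≤ B) :
    |∑ u, ∑ v, Kf u v * (G u * H v)| ≤ (3/2) * B * ((∑ u, G u^2) + ∑ u, H u^2) := by
  calc |∑ u, ∑ v, Kf u v * (G u * H v)|
      ≤ ∑ u, |∑ v, Kf u v * (G u * H v)| := Finset.abs_sum_le_sum_abs _ _
    _ ≤ ∑ u, ∑ v, |Kf u v * (G u * H v)| :=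
        Finset.sum_le_sum fun u _ => Finset.abs_sum_le_sum_abs _ _
    _ ≤ ∑ u, ∑ v, B * ((G u^2 + H v^2)/2) := by
        refine Finset.sum_le_sum fun u _ => Finset.sum_le_sum fun v _ => ?_
        rw [abs_mul]
        have h1 : |G u * H v| ≤ (G u^2 + H v^2)/2 := by
          rw [abs_mul]
          nlinarith [sq_nonneg (|G u| - |H v|), sq_abs (G u), sq_abs (H v),
            abs_nonneg (G u), abs_nonneg (H v)]
        exact mul_le_mul (hK u v) h1 (abs_nonneg _) hB
    _ = (3/2) * B * ((∑ u, G u^2) + ∑ u, H u^2) := by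
        simp only [Fin.sum_univ_three]; ring

lemma E_bound (hper : Periodic3 ξ) (hs : SmoothVF ξ) (x : V3) :
    |∑ u, ∑ v, Kc ξ x u v * (g x u * h x v)|
      ≤ 27 * WinfNorm 2 ξ^2 * ((∑ u, g x u^2) + ∑ u, h x u^2) := by
  have hW0 : 0 ≤ WinfNorm 2 ξ := W_nonneg hper hs
  have h1 := canon_bound (Kc ξ x) (fun u => g x u) (fun u => h x u) (18 * WinfNorm 2 ξ^2)
    (by positivity) (fun u v => abs_Kc_le hper hs x u v)
  have h2 : (3:ℝ)/2 * (18 * WinfNorm 2 ξ^2) * ((∑ u, g x u^2) + ∑ u, h x u^2)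
      = 27 * WinfNorm 2 ξ^2 * ((∑ u, g x u^2) + ∑ u, h x u^2) := by ring
  linarith

lemma L2inner_self_nonneg (v : VF) : 0 ≤ L2inner v v :=
  setIntegral_nonneg measurableSet_cube fun x _ =>
    Finset.sum_nonneg fun i _ => mul_self_nonneg _

lemma mem_midx_of_le {γ : ℕ × ℕ × ℕ} {m : ℕ} (hm : mdeg γ ≤ m) : γ ∈ midx m := by
  obtain ⟨a, b, c⟩ := γ
  unfold midx
  refine Finset.mem_filter.mpr ⟨?_, hm⟩
  simp only [mdeg, Finset.mem_product, Finset.mem_range] at *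
  omega

lemma L2_le_sob (f : VF) {γ : ℕ × ℕ × ℕ} {m : ℕ} (hm : mdeg γ ≤ m) :
    L2inner (Dm γ f) (Dm γ f) ≤ sobNormSq m f := by
  unfold sobNormSq sobInner
  exact Finset.single_le_sum (f := fun δ => L2inner (Dm δ f) (Dm δ f))
    (fun δ _ => L2inner_self_nonneg _) (mem_midx_of_le hm)

lemma periodicS_Fq (hpξ : Periodic3 ξ) (hsξ : SmoothVF ξ) (hpg : Periodic3 g)
    (hph : Periodic3 h) : PeriodicS (Fq ξ g h) := by
  intro x k
  show (∑ i, ∑ l, Mxi ξ (x + fun i => ((k i : ℤ):ℝ)) i l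
      * (g (x + fun i => ((k i : ℤ):ℝ)) i * h (x + fun i => ((k i : ℤ):ℝ)) l)) = _
  refine Finset.sum_congr rfl fun i _ => Finset.sum_congr rfl fun l _ => ?_
  unfold Mxi
  rw [congrFun (periodic_pd hpξ hsξ i x k) l, congrFun (periodic_pd hpξ hsξ l x k) i,
    congrFun (hpg x k) i, congrFun (hph x k) l]

lemma periodicS_q (hpξ : Periodic3 ξ) (hsξ : SmoothVF ξ) (hpg : Periodic3 g)
    (hph : Periodic3 h) (j : Fin 3) :
    PeriodicS (fun y => ξ y j * Fq ξ g h y) := by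
  intro x k
  show ξ (x + fun i => ((k i : ℤ):ℝ)) j * Fq ξ g h (x + fun i => ((k i : ℤ):ℝ)) = _
  rw [congrFun (hpξ x k) j, periodicS_Fq hpξ hsξ hpg hph x k]

lemma cont_pair (hξ : SmoothVF ξ) (hg : SmoothVF g) (hh : SmoothVF h) :
    Continuous (fun x => ∑ i, Bop ξ g x i * (stretch ξ h x i + stretchStar ξ h x i)) := by
  refine continuous_finset_sum _ fun i _ => Continuous.mul ?_ ?_
  · refine Continuous.congr ?_ fun x => (Bop_apply ξ g x i).symm
    refine Continuous.add ?_ ?_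
    · exact continuous_finset_sum _ fun j _ =>
        (cont_eval hξ j).mul (cont_eval (smooth_pd hg j) i)
    · exact continuous_finset_sum _ fun j _ =>
        (cont_eval hg j).mul (cont_eval (smooth_pd hξ i) j)
  · refine Continuous.congr ?_ fun x => (str_apply ξ h x i).symm
    exact continuous_finset_sum _ fun j _ =>
      (cont_eval hh j).mul ((cont_eval (smooth_pd hξ i) j).add (cont_eval (smooth_pd hξ j) i))

lemma cont_Ee (hξ : SmoothVF ξ) (hg : SmoothVF g) (hh : SmoothVF h) :
    Continuous (fun x => ∑ u, ∑ v, Kc ξ x u v * (g x u * h x v)) := by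
  refine continuous_finset_sum _ fun u _ => continuous_finset_sum _ fun v _ =>
    Continuous.mul ?_ ((cont_eval hg u).mul (cont_eval hh v))
  unfold Kc
  refine Continuous.sub (Continuous.add ?_ ?_) ?_
  · exact continuous_finset_sum _ fun i _ =>
      ((cont_eval (smooth_pd hξ i) v).add (cont_eval (smooth_pd hξ v) i)).mul
        (cont_eval (smooth_pd hξ i) u)
  · exact continuous_finset_sum _ fun i _ =>
      ((cont_eval (smooth_pd hξ i) u).add (cont_eval (smooth_pd hξ u) i)).mul
        (cont_eval (smooth_pd hξ i) v)
  · exact continuous_finset_sum _ fun j _ =>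
      (cont_eval hξ j).mul ((cont_eval (smooth_pd (smooth_pd hξ u) j) v).add
        (cont_eval (smooth_pd (smooth_pd hξ v) j) u))

end Aux6
/-- Control of the symmetrized top-order pairing of B_ξ against the self-adjoint part of the
stretching operator. -/
theorem stmt13 (α β : ℕ × ℕ × ℕ) :
    ∃ C : ℝ, ∀ ξ f : VF, GoodField ξ → Periodic3 f → SmoothVF f →
      L2inner (Bop ξ (Dm α f)) (fun x => stretch ξ (Dm β f) x + stretchStar ξ (Dm β f) x)
        + L2inner (Bop ξ (Dm β f)) (fun x => stretch ξ (Dm α f) x + stretchStar ξ (Dm α f) x) ≤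
      C * WinfNorm 2 ξ ^ 2 * sobNormSq (max (mdeg α) (mdeg β)) f := by
  refine ⟨54, ?_⟩
  rintro ξ f ⟨hpξ, hsξ, hdξ, -⟩ hpf hsf
  have hsg : SmoothVF (Dm α f) := smooth_Dm hsf α
  have hsh : SmoothVF (Dm β f) := smooth_Dm hsf β
  have hpg : Periodic3 (Dm α f) := periodic_Dm hpf hsf α
  have hph : Periodic3 (Dm β f) := periodic_Dm hpf hsf β
  set g : VF := Dm α f with hgdef
  set h : VF := Dm β f with hhdef
  set W : ℝ := WinfNorm 2 ξ with hWdef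
  have hW0 : 0 ≤ W := W_nonneg hpξ hsξ
  set θ : ℕ := max (mdeg α) (mdeg β) with hθdef
  have hcont1 : Continuous (fun x => ∑ i, Bop ξ g x i * (stretch ξ h x i + stretchStar ξ h x i)) :=
    cont_pair hsξ hsg hsh
  have hcont2 : Continuous (fun x => ∑ i, Bop ξ h x i * (stretch ξ g x i + stretchStar ξ g x i)) :=
    cont_pair hsξ hsh hsg
  have hcontDv : Continuous (fun x => ∑ j, pdS j (fun y => ξ y j * Fq ξ g h y) x) :=
    continuous_finset_sum _ fun j _ =>
      (smoothS_pdS (smoothS_mul (smooth_eval hsξ j) (smoothS_Fq hsξ hsg hsh)) j).continuous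
  have hcontEe : Continuous (fun x => ∑ u, ∑ v, Kc ξ x u v * (g x u * h x v)) :=
    cont_Ee hsξ hsg hsh
  have hcontG2 : Continuous (fun x => ∑ u, g x u ^ 2) :=
    continuous_finset_sum _ fun u _ => (cont_eval hsg u).pow 2
  have hcontH2 : Continuous (fun x => ∑ u, h x u ^ 2) :=
    continuous_finset_sum _ fun u _ => (cont_eval hsh u).pow 2
  have hcontBd : Continuous (fun x => 27 * W^2 * ((∑ u, g x u ^ 2) + ∑ u, h x u ^ 2)) :=
    continuous_const.mul (hcontG2.add hcontH2)
  -- step 1: combine the two inner products into a single integral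
  have hLHS : L2inner (Bop ξ g) (fun x => stretch ξ h x + stretchStar ξ h x)
      + L2inner (Bop ξ h) (fun x => stretch ξ g x + stretchStar ξ g x)
      = ∫ x in cube, ((∑ i, Bop ξ g x i * (stretch ξ h x i + stretchStar ξ h x i))
          + ∑ i, Bop ξ h x i * (stretch ξ g x i + stretchStar ξ g x i)) := by
    rw [integral_add (integrableOn_cube hcont1) (integrableOn_cube hcont2)]
    rfl
  -- step 2: pointwise identity
  have hstep2 : (∫ x in cube, ((∑ i, Bop ξ g x i * (stretch ξ h x i + stretchStar ξ h x i))
          + ∑ i, Bop ξ h x i * (stretch ξ g x i + stretchStar ξ g x i)))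
      = ∫ x in cube, ((∑ j, pdS j (fun y => ξ y j * Fq ξ g h y) x)
          + ∑ u, ∑ v, Kc ξ x u v * (g x u * h x v)) :=
    setIntegral_congr_fun measurableSet_cube fun x _ => pointwise_id hsξ hsg hsh hdξ x
  -- step 3: split and kill the divergence part
  have hstep3 : (∫ x in cube, ((∑ j, pdS j (fun y => ξ y j * Fq ξ g h y) x)
          + ∑ u, ∑ v, Kc ξ x u v * (g x u * h x v)))
      = ∫ x in cube, ∑ u, ∑ v, Kc ξ x u v * (g x u * h x v) := by
    rw [integral_add (integrableOn_cube hcontDv) (integrableOn_cube hcontEe)]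
    have hDv0 : (∫ x in cube, ∑ j, pdS j (fun y => ξ y j * Fq ξ g h y) x) = 0 := by
      have hsum := integral_finset_sum (μ := volume.restrict cube) Finset.univ
        (f := fun j x => pdS j (fun y => ξ y j * Fq ξ g h y) x)
        (fun j _ => integrableOn_cube
          (smoothS_pdS (smoothS_mul (smooth_eval hsξ j) (smoothS_Fq hsξ hsg hsh)) j).continuous)
      rw [hsum]
      exact Finset.sum_eq_zero fun j _ => integral_pdS_eq_zero
        (smoothS_mul (smooth_eval hsξ j) (smoothS_Fq hsξ hsg hsh))
        (periodicS_q hpξ hsξ hpg hph j) j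
    rw [hDv0, zero_add]
  -- step 4: bound the remainder
  have hstep4 : (∫ x in cube, ∑ u, ∑ v, Kc ξ x u v * (g x u * h x v))
      ≤ ∫ x in cube, 27 * W^2 * ((∑ u, g x u ^ 2) + ∑ u, h x u ^ 2) := by
    refine setIntegral_mono_on (integrableOn_cube hcontEe) (integrableOn_cube hcontBd)
      measurableSet_cube fun x _ => ?_
    exact le_trans (le_abs_self _) (E_bound hpξ hsξ x)
  -- step 5: compute the bound integral
  have hstep5 : (∫ x in cube, 27 * W^2 * ((∑ u, g x u ^ 2) + ∑ u, h x u ^ 2))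
      = 27 * W^2 * ((∫ x in cube, ∑ u, g x u ^ 2) + ∫ x in cube, ∑ u, h x u ^ 2) := by
    rw [integral_const_mul, integral_add (integrableOn_cube hcontG2) (integrableOn_cube hcontH2)]
  have hg2 : (∫ x in cube, ∑ u, g x u ^ 2) = L2inner g g :=
    setIntegral_congr_fun measurableSet_cube fun x _ =>
      Finset.sum_congr rfl fun u _ => by ring
  have hh2 : (∫ x in cube, ∑ u, h x u ^ 2) = L2inner h h :=
    setIntegral_congr_fun measurableSet_cube fun x _ =>
      Finset.sum_congr rfl fun u _ => by ring
  have hgs : L2inner g g ≤ sobNormSq θ f := L2_le_sob f (le_max_left _ _)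
  have hhs : L2inner h h ≤ sobNormSq θ f := L2_le_sob f (le_max_right _ _)
  have hfin : 27 * W^2 * (L2inner g g + L2inner h h) ≤ 54 * W^2 * sobNormSq θ f := by
    have h1 : 27 * W^2 * (L2inner g g + L2inner h h)
        ≤ 27 * W^2 * (sobNormSq θ f + sobNormSq θ f) := by
      apply mul_le_mul_of_nonneg_left (by linarith) (by positivity)
    linarith
  calc L2inner (Bop ξ g) (fun x => stretch ξ h x + stretchStar ξ h x)
      + L2inner (Bop ξ h) (fun x => stretch ξ g x + stretchStar ξ g x)
      = ∫ x in cube, ∑ u, ∑ v, Kc ξ x u v * (g x u * h x v) := by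
        rw [hLHS, hstep2, hstep3]
    _ ≤ 27 * W^2 * (L2inner g g + L2inner h h) := by
        rw [← hg2, ← hh2, ← hstep5]; exact hstep4
    _ ≤ 54 * W^2 * sobNormSq θ f := hfin
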